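/- For a free tree T on n vertices rooted at any vertex u, the number of projective arrangements of the rooted tree T^u in which u occupies the first position equals ∏_{v ∈ V} deg(v)!, independently of the choice of u. -/

import Mathlib

open Finset

attribute [local instance] Classical.propDecidable

/-- An arrangement `π` of the vertices of `G` is planar if no two edges cross. -/
def IsPlanarArr {n : ℕ} (G : SimpleGraph (Fin n)) (π : Equiv.Perm (Fin n)) : Prop :=
  ∀ s t u v : Fin n, G.Adj s t → G.Adj u v →
    ¬ (π s < π u ∧ π u < π t ∧ π t < π v)

/-- An arrangement of `G` rooted at `r` is projective if it is planar and no edge covers `r`. -/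
def IsProjectiveArr {n : ℕ} (G : SimpleGraph (Fin n)) (r : Fin n) (π : Equiv.Perm (Fin n)) : Prop :=
  IsPlanarArr G π ∧ ∀ s t : Fin n, G.Adj s t → ¬ (π s < π r ∧ π r < π t)

/-- The set of vertices of the subtree rooted at `u` when `G` is rooted at `r`. -/
noncomputable def subtreeFinset {n : ℕ} (G : SimpleGraph (Fin n)) (r u : Fin n) : Finset (Fin n) :=
  univ.filter (fun v => G.dist r v = G.dist r u + G.dist u v)

/-- Directional size `s_r(u)`: size of the subtree rooted at `u` when `G` is rooted at `r`. -/
noncomputable def subtreeSize {n : ℕ} (G : SimpleGraph (Fin n)) (r u : Fin n) : ℕ :=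
  (subtreeFinset G r u).card

/-- Out-degree (number of children) of `u` in `G` rooted at `r`. -/
noncomputable def outDeg {n : ℕ} (G : SimpleGraph (Fin n)) (r u : Fin n) : ℕ :=
  (univ.filter (fun v => G.Adj u v ∧ G.dist r v = G.dist r u + 1)).card

/-- The sum of edge lengths of `G` in the arrangement `π`. -/
noncomputable def Dsum {n : ℕ} (G : SimpleGraph (Fin n)) (π : Equiv.Perm (Fin n)) : ℤ :=
  ∑ e ∈ G.edgeFinset,
    Sym2.lift ⟨fun u v => |((π u : ℕ) : ℤ) - ((π v : ℕ) : ℤ)|,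
      fun u v => abs_sub_comm _ _⟩ e

/-- The set of planar arrangements of `G`. -/
noncomputable def planarSet {n : ℕ} (G : SimpleGraph (Fin n)) : Finset (Equiv.Perm (Fin n)) :=
  univ.filter (IsPlanarArr G)

/-- The set of projective arrangements of `G` rooted at `r`. -/
noncomputable def projSet {n : ℕ} (G : SimpleGraph (Fin n)) (r : Fin n) :
    Finset (Equiv.Perm (Fin n)) :=
  univ.filter (IsProjectiveArr G r)

/-- The set of projective arrangements of `G` rooted at `r` with `r` in the first position. -/
noncomputable def projSet1 {n : ℕ} (G : SimpleGraph (Fin n)) (r : Fin n) :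
    Finset (Equiv.Perm (Fin n)) :=
  univ.filter (fun π => IsProjectiveArr G r π ∧ (π r : ℕ) = 0)

namespace ProjProof

open SimpleGraph

variable {n : ℕ} {G : SimpleGraph (Fin n)} {u : Fin n}

lemma mem_sub {v x : Fin n} :
    x ∈ subtreeFinset G u v ↔ G.dist u x = G.dist u v + G.dist v x := by
  simp [subtreeFinset]

lemma dist_split (hc : G.Connected) {x y a : Fin n} (p : G.Walk x y)
    (hp : p.length = G.dist x y) (ha : a ∈ p.support) :
    G.dist x a = (p.takeUntil a ha).length ∧ G.dist a y = (p.dropUntil a ha).length := by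
  have h1 := SimpleGraph.dist_le (p.takeUntil a ha)
  have h2 := SimpleGraph.dist_le (p.dropUntil a ha)
  have h3 : (p.takeUntil a ha).length + (p.dropUntil a ha).length = p.length := by
    rw [← SimpleGraph.Walk.length_append, p.take_spec ha]
  have h4 := hc.dist_triangle (u := x) (v := a) (w := y)
  omega

lemma dist_add_of_mem_support (hc : G.Connected) {x y a : Fin n} (p : G.Walk x y)
    (hp : p.length = G.dist x y) (ha : a ∈ p.support) :
    G.dist x y = G.dist x a + G.dist a y := by
  obtain ⟨h1, h2⟩ := dist_split hc p hp ha
  have h3 : (p.takeUntil a ha).length + (p.dropUntil a ha).length = p.length := by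
    rw [← SimpleGraph.Walk.length_append, p.take_spec ha]
  omega

/-- a path of length dist -/
lemma exists_dist_path (hc : G.Connected) (x y : Fin n) :
    ∃ p : G.Walk x y, p.IsPath ∧ p.length = G.dist x y := by
  obtain ⟨p, hp⟩ := hc.exists_walk_length_eq_dist x y
  exact ⟨p, p.isPath_of_length_eq_dist hp, hp⟩

lemma adj_dist (hT : G.IsTree) {x y : Fin n} (hadj : G.Adj x y) :
    G.dist u y = G.dist u x + 1 ∨ G.dist u x = G.dist u y + 1 := by
  have hc := hT.isConnected
  have hxy : G.dist x y = 1 := SimpleGraph.dist_eq_one_iff_adj.2 hadj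
  have hyx : G.dist y x = 1 := SimpleGraph.dist_eq_one_iff_adj.2 hadj.symm
  have h1 : G.dist u y ≤ G.dist u x + 1 := by
    have := hc.dist_triangle (u := u) (v := x) (w := y); omega
  have h2 : G.dist u x ≤ G.dist u y + 1 := by
    have := hc.dist_triangle (u := u) (v := y) (w := x); omega
  by_contra hcon
  push_neg at hcon
  have heq : G.dist u x = G.dist u y := by omega
  obtain ⟨p, hp, hpl⟩ := exists_dist_path hc u x
  by_cases hy : y ∈ p.support
  · have := dist_add_of_mem_support hc p hpl hy
    have hy0 : G.dist y x = 0 := by omega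
    exact hadj.ne (hc.dist_eq_zero_iff.1 hy0).symm
  · obtain ⟨q, hq, hql⟩ := exists_dist_path hc u y
    set w := (SimpleGraph.Walk.cons hadj.symm p.reverse).reverse with hwdef
    have hw : w.IsPath := by
      apply SimpleGraph.Walk.IsPath.reverse
      rw [SimpleGraph.Walk.cons_isPath_iff]
      exact ⟨hp.reverse, by simpa using hy⟩
    have hwl : w.length = p.length + 1 := by simp [hwdef]
    have huniq := hT.IsAcyclic.path_unique ⟨w, hw⟩ ⟨q, hq⟩
    have hlen : w.length = q.length := congrArg (fun r : G.Path u y => r.1.length) huniq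
    omega

lemma self_mem_sub (v : Fin n) : v ∈ subtreeFinset G u v := by
  simp [mem_sub, SimpleGraph.dist_self]

lemma mem_sub_root (hc : G.Connected) (x : Fin n) : x ∈ subtreeFinset G u u := by
  simp [mem_sub, SimpleGraph.dist_self]

lemma sub_trans (hc : G.Connected) {v x : Fin n} (hx : x ∈ subtreeFinset G u v) :
    subtreeFinset G u x ⊆ subtreeFinset G u v := by
  intro z hz
  rw [mem_sub] at *
  have h1 := hc.dist_triangle (u := u) (v := v) (w := z)
  have h2 := hc.dist_triangle (u := v) (v := x) (w := z)
  omega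

lemma anc_antisymm (hc : G.Connected) {x y : Fin n}
    (h1 : x ∈ subtreeFinset G u y) (h2 : y ∈ subtreeFinset G u x) : x = y := by
  rw [mem_sub] at *
  have hcomm : G.dist x y = G.dist y x := SimpleGraph.dist_comm
  have : G.dist x y = 0 := by omega
  exact (hc.dist_eq_zero_iff.1 this)

lemma root_mem_sub_iff (hc : G.Connected) {v : Fin n} :
    u ∈ subtreeFinset G u v ↔ v = u := by
  constructor
  · intro h
    rw [mem_sub, SimpleGraph.dist_self] at h
    have h0 : G.dist u v = 0 := by omega
    have h5 : u = v := hc.dist_eq_zero_iff.1 h0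
    exact h5.symm
  · rintro rfl; simp [mem_sub, SimpleGraph.dist_self]

lemma depth_le_of_mem (hm : x ∈ subtreeFinset G u v) : G.dist u v ≤ G.dist u x := by
  rw [mem_sub] at hm; omega

lemma eq_of_mem_of_depth_eq (hc : G.Connected) (hm : x ∈ subtreeFinset G u v)
    (hd : G.dist u x = G.dist u v) : x = v := by
  rw [mem_sub] at hm
  have : G.dist v x = 0 := by omega
  exact (hc.dist_eq_zero_iff.1 this).symm

lemma mem_support_iff_anc (hT : G.IsTree) {x a : Fin n} (p : G.Walk u x)
    (hp : p.IsPath) (hpl : p.length = G.dist u x) :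
    a ∈ p.support ↔ x ∈ subtreeFinset G u a := by
  have hc := hT.isConnected
  constructor
  · intro ha
    rw [mem_sub]
    exact dist_add_of_mem_support hc p hpl ha
  · intro hmem
    rw [mem_sub] at hmem
    obtain ⟨q1, hq1, hq1l⟩ := exists_dist_path hc u a
    obtain ⟨q2, hq2, hq2l⟩ := exists_dist_path hc a x
    have hlen : (q1.append q2).length = G.dist u x := by
      rw [SimpleGraph.Walk.length_append]; omega
    have hqp : (q1.append q2).IsPath := (q1.append q2).isPath_of_length_eq_dist hlen
    have := hT.IsAcyclic.path_unique ⟨q1.append q2, hqp⟩ ⟨p, hp⟩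
    have hw : q1.append q2 = p := congrArg Subtype.val this
    rw [← hw]
    rw [SimpleGraph.Walk.mem_support_append_iff]
    left; exact q1.end_mem_support

lemma anc_total (hT : G.IsTree) {x y y' : Fin n}
    (h1 : x ∈ subtreeFinset G u y) (h2 : x ∈ subtreeFinset G u y') :
    y ∈ subtreeFinset G u y' ∨ y' ∈ subtreeFinset G u y := by
  have hc := hT.isConnected
  obtain ⟨p, hp, hpl⟩ := exists_dist_path hc u x
  have hy : y ∈ p.support := (mem_support_iff_anc hT p hp hpl).2 h1
  have hy' : y' ∈ p.support := (mem_support_iff_anc hT p hp hpl).2 h2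
  -- use takeUntil y'
  have hsplit := p.take_spec hy'
  rw [← hsplit, SimpleGraph.Walk.mem_support_append_iff] at hy
  obtain ⟨hd1, hd2⟩ := dist_split hc p hpl hy'
  rcases hy with hy | hy
  · -- y on the path u → y'
    right
    rw [mem_sub]
    exact dist_add_of_mem_support hc (p.takeUntil y' hy') hd1.symm hy
  · -- y on the path y' → x
    left
    rw [mem_sub]
    have := dist_add_of_mem_support hc (p.dropUntil y' hy') hd2.symm hy
    rw [mem_sub] at h1 h2
    have htr := hc.dist_triangle (u := u) (v := y') (w := y)
    have htr2 := hc.dist_triangle (u := y') (v := y) (w := x)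
    have hcm : G.dist y' y = G.dist y y' := SimpleGraph.dist_comm
    omega

lemma anc_eq_of_depth (hT : G.IsTree) {x a b : Fin n}
    (ha : x ∈ subtreeFinset G u a) (hb : x ∈ subtreeFinset G u b)
    (hd : G.dist u a = G.dist u b) : a = b := by
  rcases anc_total hT ha hb with h | h
  · exact eq_of_mem_of_depth_eq hT.isConnected h hd
  · exact (eq_of_mem_of_depth_eq hT.isConnected h hd.symm).symm


section ParentDirc

lemma exists_parent (hT : G.IsTree) {v : Fin n} (hv : v ≠ u) :
    ∃ p, G.Adj v p ∧ G.dist u v = G.dist u p + 1 := by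
  have hc := hT.isConnected
  have hd : 0 < G.dist u v := hc.pos_dist_of_ne (Ne.symm hv)
  obtain ⟨p, hp, hpl⟩ := exists_dist_path hc u v
  obtain ⟨w, hadj, q, hq⟩ := SimpleGraph.Walk.exists_eq_cons_of_ne hv p.reverse
  have hql : q.length + 1 = G.dist u v := by
    have : p.reverse.length = p.length := SimpleGraph.Walk.length_reverse _
    rw [hq] at this
    simp at this
    omega
  have h1 : G.dist u w ≤ G.dist u v - 1 := by
    have := SimpleGraph.dist_le q.reverse
    simp at this
    omega
  have h2 : G.dist u v ≤ G.dist u w + 1 := by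
    have := hc.dist_triangle (u := u) (v := w) (w := v)
    have : G.dist w v = 1 := SimpleGraph.dist_eq_one_iff_adj.2 hadj.symm
    have := hc.dist_triangle (u := u) (v := w) (w := v)
    have hwv : G.dist w v = 1 := SimpleGraph.dist_eq_one_iff_adj.2 hadj.symm
    omega
  exact ⟨w, hadj, by omega⟩

noncomputable def par (G : SimpleGraph (Fin n)) (u v : Fin n) : Fin n :=
  @Classical.epsilon _ ⟨u⟩ fun p => G.Adj v p ∧ G.dist u v = G.dist u p + 1

lemma par_spec (hT : G.IsTree) {v : Fin n} (hv : v ≠ u) :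
    G.Adj v (par G u v) ∧ G.dist u v = G.dist u (par G u v) + 1 :=
  @Classical.epsilon_spec _ _ (exists_parent hT hv)

lemma mem_sub_par (hT : G.IsTree) {v : Fin n} (hv : v ≠ u) :
    v ∈ subtreeFinset G u (par G u v) := by
  obtain ⟨h1, h2⟩ := par_spec hT hv
  rw [mem_sub]
  have : G.dist (par G u v) v = 1 := SimpleGraph.dist_eq_one_iff_adj.2 h1.symm
  omega

lemma ne_root_of_mem_par {v p : Fin n} (hadj : G.Adj v p)
    (hd : G.dist u v = G.dist u p + 1) : v ≠ u := by
  intro h; subst h; simp [SimpleGraph.dist_self] at hd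

lemma par_eq_of (hT : G.IsTree) {v p : Fin n} (hadj : G.Adj v p)
    (hd : G.dist u v = G.dist u p + 1) : par G u v = p := by
  have hv : v ≠ u := ne_root_of_mem_par hadj hd
  obtain ⟨h1, h2⟩ := par_spec hT hv
  apply anc_eq_of_depth hT (x := v)
  · exact mem_sub_par hT hv
  · rw [mem_sub]
    have : G.dist p v = 1 := SimpleGraph.dist_eq_one_iff_adj.2 hadj.symm
    omega
  · omega

lemma par_mem_sub (hT : G.IsTree) {v x : Fin n} (hx : x ∈ subtreeFinset G u v)
    (hne : x ≠ v) : par G u x ∈ subtreeFinset G u v := by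
  have hc := hT.isConnected
  have hxu : x ≠ u := by
    intro h
    apply hne
    rw [h] at hx
    exact h.trans ((root_mem_sub_iff hc).1 hx).symm
  obtain ⟨h1, h2⟩ := par_spec hT hxu
  have hxp : x ∈ subtreeFinset G u (par G u x) := mem_sub_par hT hxu
  rcases anc_total hT hx hxp with h | h
  · -- v ∈ S (par x)
    have hd1 := depth_le_of_mem hx
    have hd2 := depth_le_of_mem h
    rw [mem_sub] at hx
    rw [mem_sub] at hxp
    have hvx : G.dist v x ≠ 0 := by
      intro h0
      exact hne (hc.dist_eq_zero_iff.1 h0).symm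
    have hdeq : G.dist u v = G.dist u (par G u x) := by omega
    have heq2 : v = par G u x := eq_of_mem_of_depth_eq hc h hdeq
    rw [← heq2]; exact self_mem_sub v
  · exact h

lemma exists_dirc (hT : G.IsTree) {v x : Fin n} (hx : x ∈ subtreeFinset G u v)
    (hne : x ≠ v) :
    ∃ c, G.Adj v c ∧ G.dist u c = G.dist u v + 1 ∧ x ∈ subtreeFinset G u c := by
  have hc := hT.isConnected
  obtain ⟨p, hp, hpl⟩ := exists_dist_path hc v x
  obtain ⟨w, hadj, q, hq⟩ := SimpleGraph.Walk.exists_eq_cons_of_ne (Ne.symm hne) p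
  have hql : q.length + 1 = G.dist v x := by
    rw [hq] at hpl; simp at hpl; omega
  have hdcx : G.dist w x ≤ G.dist v x - 1 := by
    have := SimpleGraph.dist_le q; omega
  rw [mem_sub] at hx
  have htr1 := hc.dist_triangle (u := u) (v := v) (w := w)
  have htr2 := hc.dist_triangle (u := u) (v := w) (w := x)
  have hvw : G.dist v w = 1 := SimpleGraph.dist_eq_one_iff_adj.2 hadj
  have hvx1 : 1 ≤ G.dist v x := by
    have : G.dist v x ≠ 0 := fun h0 => hne (hc.dist_eq_zero_iff.1 h0).symm
    omega
  have hduw : G.dist u w = G.dist u v + 1 := by omega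
  refine ⟨w, hadj, hduw, ?_⟩
  rw [mem_sub]
  omega

noncomputable def dirc (G : SimpleGraph (Fin n)) (u v x : Fin n) : Fin n :=
  @Classical.epsilon _ ⟨u⟩ fun c =>
    G.Adj v c ∧ G.dist u c = G.dist u v + 1 ∧ x ∈ subtreeFinset G u c

lemma dirc_spec (hT : G.IsTree) {v x : Fin n} (hx : x ∈ subtreeFinset G u v)
    (hne : x ≠ v) :
    G.Adj v (dirc G u v x) ∧ G.dist u (dirc G u v x) = G.dist u v + 1 ∧
      x ∈ subtreeFinset G u (dirc G u v x) :=
  @Classical.epsilon_spec _ _ (exists_dirc hT hx hne)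

lemma dirc_eq_of (hT : G.IsTree) {v x c : Fin n} (hx : x ∈ subtreeFinset G u v)
    (hne : x ≠ v) (h1 : G.Adj v c) (h2 : G.dist u c = G.dist u v + 1)
    (h3 : x ∈ subtreeFinset G u c) : dirc G u v x = c := by
  obtain ⟨g1, g2, g3⟩ := dirc_spec hT hx hne
  exact anc_eq_of_depth hT g3 h3 (by omega)

lemma dirc_child (hT : G.IsTree) {v c : Fin n} (h1 : G.Adj v c)
    (h2 : G.dist u c = G.dist u v + 1) : dirc G u v c = c := by
  have hmem : c ∈ subtreeFinset G u v := by
    rw [mem_sub]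
    have : G.dist v c = 1 := SimpleGraph.dist_eq_one_iff_adj.2 h1
    omega
  have hne : c ≠ v := by intro h; subst h; omega
  exact dirc_eq_of hT hmem hne h1 h2 (self_mem_sub c)

lemma not_mem_sub_of_depth_lt {v x : Fin n} (h : G.dist u x < G.dist u v) :
    x ∉ subtreeFinset G u v := fun hm => absurd (depth_le_of_mem hm) (by omega)

lemma root_not_mem_dirc (hT : G.IsTree) {v x : Fin n} (hx : x ∈ subtreeFinset G u v)
    (hne : x ≠ v) : v ∉ subtreeFinset G u (dirc G u v x) := by
  obtain ⟨g1, g2, g3⟩ := dirc_spec hT hx hne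
  exact not_mem_sub_of_depth_lt (by omega)

end ParentDirc

section Lca

lemma exists_lca (hT : G.IsTree) (x y : Fin n) :
    ∃ m, x ∈ subtreeFinset G u m ∧ y ∈ subtreeFinset G u m ∧
      ∀ m', x ∈ subtreeFinset G u m' → y ∈ subtreeFinset G u m' →
        m ∈ subtreeFinset G u m' := by
  have hc := hT.isConnected
  set CA := univ.filter (fun m => x ∈ subtreeFinset G u m ∧ y ∈ subtreeFinset G u m) with hCA
  have hne : CA.Nonempty := ⟨u, by simp [hCA, mem_sub_root hc]⟩
  obtain ⟨m, hm, hmax⟩ := Finset.exists_max_image CA (G.dist u) hne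
  simp only [hCA, Finset.mem_filter, Finset.mem_univ, true_and] at hm hmax
  refine ⟨m, hm.1, hm.2, fun m' h1 h2 => ?_⟩
  rcases anc_total hT hm.1 h1 with h | h
  · exact h
  · have hle := hmax m' ⟨h1, h2⟩
    have heq : m' = m := eq_of_mem_of_depth_eq hc h (le_antisymm hle (depth_le_of_mem h))
    rw [heq]; exact self_mem_sub m

noncomputable def lca (G : SimpleGraph (Fin n)) (u x y : Fin n) : Fin n :=
  @Classical.epsilon _ ⟨u⟩ fun m =>
    x ∈ subtreeFinset G u m ∧ y ∈ subtreeFinset G u m ∧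
      ∀ m', x ∈ subtreeFinset G u m' → y ∈ subtreeFinset G u m' →
        m ∈ subtreeFinset G u m'

lemma lca_spec (hT : G.IsTree) (x y : Fin n) :
    x ∈ subtreeFinset G u (lca G u x y) ∧ y ∈ subtreeFinset G u (lca G u x y) ∧
      ∀ m', x ∈ subtreeFinset G u m' → y ∈ subtreeFinset G u m' →
        lca G u x y ∈ subtreeFinset G u m' :=
  @Classical.epsilon_spec _ _ (exists_lca hT x y)

lemma lca_eq_of (hT : G.IsTree) {x y m : Fin n}
    (h1 : x ∈ subtreeFinset G u m) (h2 : y ∈ subtreeFinset G u m)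
    (h3 : ∀ m', x ∈ subtreeFinset G u m' → y ∈ subtreeFinset G u m' →
      m ∈ subtreeFinset G u m') : lca G u x y = m := by
  obtain ⟨g1, g2, g3⟩ := lca_spec hT x y
  exact anc_antisymm hT.isConnected (g3 m h1 h2) (h3 _ g1 g2)

lemma lca_comm (hT : G.IsTree) (x y : Fin n) : lca G u x y = lca G u y x := by
  obtain ⟨g1, g2, g3⟩ := lca_spec hT y x
  exact lca_eq_of hT g2 g1 (fun m' h1 h2 => g3 m' h2 h1)

lemma lca_of_mem (hT : G.IsTree) {x y : Fin n} (h : y ∈ subtreeFinset G u x) :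
    lca G u x y = x :=
  lca_eq_of hT (self_mem_sub x) h (fun m' h1 _ => h1)

lemma lca_incomp (hT : G.IsTree) {x y : Fin n} (hxy : x ∉ subtreeFinset G u y)
    (hyx : y ∉ subtreeFinset G u x) :
    x ≠ lca G u x y ∧ y ≠ lca G u x y ∧
      dirc G u (lca G u x y) x ≠ dirc G u (lca G u x y) y := by
  obtain ⟨g1, g2, g3⟩ := lca_spec hT x y
  have hx : x ≠ lca G u x y := by
    intro h; rw [← h] at g2; exact hyx g2
  have hy : y ≠ lca G u x y := by
    intro h; rw [← h] at g1; exact hxy g1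
  refine ⟨hx, hy, fun heq => ?_⟩
  obtain ⟨d1, d2, d3⟩ := dirc_spec hT g1 hx
  obtain ⟨e1, e2, e3⟩ := dirc_spec hT g2 hy
  rw [heq] at d3
  have hmem := g3 _ d3 e3
  have := depth_le_of_mem hmem
  omega

lemma dirc_congr_of_sub (hT : G.IsTree) {s v z : Fin n}
    (hs : s ∈ subtreeFinset G u v) (hvz : v ∈ subtreeFinset G u z) (hvne : v ≠ z) :
    s ∈ subtreeFinset G u z ∧ s ≠ z ∧ dirc G u z s = dirc G u z v := by
  have hc := hT.isConnected
  have hsz : s ∈ subtreeFinset G u z := sub_trans hc hvz hs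
  have hsne : s ≠ z := by
    intro h; subst h
    exact hvne (anc_antisymm hc hvz hs)
  obtain ⟨d1, d2, d3⟩ := dirc_spec hT hvz hvne
  exact ⟨hsz, hsne, dirc_eq_of hT hsz hsne d1 d2 (sub_trans hc d3 hs)⟩

lemma lca_congr (hT : G.IsTree) {s v z : Fin n}
    (hs : s ∈ subtreeFinset G u v) (hz : z ∉ subtreeFinset G u v)
    (hvz : v ∉ subtreeFinset G u z) :
    s ∉ subtreeFinset G u z ∧ z ∉ subtreeFinset G u s ∧
      lca G u s z = lca G u v z ∧
      dirc G u (lca G u v z) s = dirc G u (lca G u v z) v := by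
  have hc := hT.isConnected
  have h1 : s ∉ subtreeFinset G u z := by
    intro hmem
    rcases anc_total hT hs hmem with h | h
    · exact hvz h
    · exact hz h
  have h2 : z ∉ subtreeFinset G u s := fun hmem => hz (sub_trans hc hs hmem)
  obtain ⟨g1, g2, g3⟩ := lca_spec hT v z
  set m := lca G u v z with hm
  have hvm : v ≠ m := by
    intro h; rw [← h] at g2; exact hz g2
  have hsm : s ∈ subtreeFinset G u m := sub_trans hc g1 hs
  have hsmne : s ≠ m := by
    intro h; rw [← h] at g2; exact h2 g2
  have hlca : lca G u s z = m := by
    apply lca_eq_of hT hsm g2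
    intro m' hsm' hzm'
    have hvm' : v ∈ subtreeFinset G u m' := by
      rcases anc_total hT hs hsm' with h | h
      · exact h
      · exact absurd (sub_trans hc h hzm') hz
    exact g3 m' hvm' hzm'
  obtain ⟨d1, d2, d3⟩ := dirc_spec hT g1 hvm
  exact ⟨h1, h2, hlca, dirc_eq_of hT hsm hsmne d1 d2 (sub_trans hc d3 hs)⟩

end Lca


section Interval

variable (G u) in
/-- Every subtree is an interval of positions. -/
def Itv (π : Equiv.Perm (Fin n)) : Prop :=
  ∀ v s t z : Fin n, s ∈ subtreeFinset G u v → t ∈ subtreeFinset G u v →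
    π s < π z → π z < π t → z ∈ subtreeFinset G u v

lemma adj_mem_cases (hT : G.IsTree) {p q : Fin n} (h : G.Adj p q) :
    q ∈ subtreeFinset G u p ∨ p ∈ subtreeFinset G u q := by
  have h1 : G.dist p q = 1 := SimpleGraph.dist_eq_one_iff_adj.2 h
  have h2 : G.dist q p = 1 := SimpleGraph.dist_eq_one_iff_adj.2 h.symm
  rcases adj_dist (u := u) hT h with hd | hd
  · left; rw [mem_sub]; omega
  · right; rw [mem_sub]; omega

lemma par_eq_of_mem (hT : G.IsTree) {s t : Fin n} (hadj : G.Adj s t)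
    (hmem : s ∈ subtreeFinset G u t) : par G u s = t := by
  have h1 : G.dist t s = 1 := SimpleGraph.dist_eq_one_iff_adj.2 hadj.symm
  rw [mem_sub] at hmem
  exact par_eq_of hT hadj (by omega)

lemma boundary (hT : G.IsTree) {v s t : Fin n} (hadj : G.Adj s t)
    (hs : s ∈ subtreeFinset G u v) (ht : t ∉ subtreeFinset G u v) : s = v := by
  have hc := hT.isConnected
  rcases adj_mem_cases hT hadj with h | h
  · exact absurd (sub_trans hc hs h) ht
  · by_contra hne
    have hpar : par G u s = t := par_eq_of_mem hT hadj h
    rw [← hpar] at ht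
    exact ht (par_mem_sub hT hs hne)

lemma walk_straddle (π : Equiv.Perm (Fin n)) {a b : Fin n} (w : G.Walk a b) (z : Fin n)
    (hne : ∀ x ∈ w.support, π x ≠ π z)
    (hab : (π a < π z ∧ π z < π b) ∨ (π b < π z ∧ π z < π a)) :
    ∃ s t, G.Adj s t ∧ s ∈ w.support ∧ t ∈ w.support ∧ π s < π z ∧ π z < π t := by
  induction w with
  | nil =>
    rcases hab with ⟨h1, h2⟩ | ⟨h1, h2⟩ <;> exact absurd (h1.trans h2) (lt_irrefl _)
  | @cons p q r hpq w ih =>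
    have hq : π q ≠ π z := hne q (by simp)
    have hsub : ∀ x ∈ w.support, π x ≠ π z := fun x hx => hne x (by simp [hx])
    rcases hab with ⟨h1, h2⟩ | ⟨h1, h2⟩
    · rcases lt_or_gt_of_ne hq with hq' | hq'
      · obtain ⟨s, t, h⟩ := ih hsub (Or.inl ⟨hq', h2⟩)
        exact ⟨s, t, h.1, by simp [h.2.1], by simp [h.2.2.1], h.2.2.2⟩
      · exact ⟨p, q, hpq, by simp, by simp, h1, hq'⟩
    · rcases lt_or_gt_of_ne hq with hq' | hq'
      · exact ⟨q, p, hpq.symm, by simp, by simp, hq', h2⟩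
      · obtain ⟨s, t, h⟩ := ih hsub (Or.inr ⟨h1, hq'⟩)
        exact ⟨s, t, h.1, by simp [h.2.1], by simp [h.2.2.1], h.2.2.2⟩

lemma walk_exit (π : Equiv.Perm (Fin n)) {c d : Fin n} (w : G.Walk c d) (a b : Fin n)
    (hne : ∀ x ∈ w.support, π x ≠ π a ∧ π x ≠ π b)
    (hcin : π a < π c ∧ π c < π b) (hdout : ¬(π a < π d ∧ π d < π b)) :
    ∃ s t, G.Adj s t ∧ s ∈ w.support ∧ t ∈ w.support ∧
      (π a < π s ∧ π s < π b) ∧ ¬(π a < π t ∧ π t < π b) := by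
  induction w with
  | nil => exact absurd hcin hdout
  | @cons p q r hpq w ih =>
    by_cases hq : π a < π q ∧ π q < π b
    · obtain ⟨s, t, h⟩ := ih (fun x hx => hne x (by simp [hx])) hq hdout
      exact ⟨s, t, h.1, by simp [h.2.1], by simp [h.2.2.1], h.2.2.2⟩
    · exact ⟨p, q, hpq, by simp, by simp, hcin, hq⟩

lemma exists_walk_in_sub (hT : G.IsTree) {v s : Fin n} (hs : s ∈ subtreeFinset G u v) :
    ∃ w : G.Walk v s, ∀ x ∈ w.support, x ∈ subtreeFinset G u v := by
  have hc := hT.isConnected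
  obtain ⟨p, hp, hpl⟩ := exists_dist_path hc v s
  refine ⟨p, fun x hx => ?_⟩
  have h1 := dist_add_of_mem_support hc p hpl hx
  rw [mem_sub] at hs ⊢
  have h2 := hc.dist_triangle (u := u) (v := v) (w := x)
  have h3 := hc.dist_triangle (u := u) (v := x) (w := s)
  omega

lemma itv_of_planar (hT : G.IsTree) {π : Equiv.Perm (Fin n)}
    (hplan : IsPlanarArr G π) (h0 : (π u : ℕ) = 0) : Itv G u π := by
  have hc := hT.isConnected
  intro v s t z hs ht h1 h2
  by_contra hz
  -- z ≠ u and v ≠ u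
  have hvu : v ≠ u := by
    rintro rfl; exact hz (mem_sub_root hc z)
  have hzu : z ≠ u := by
    rintro rfl
    have : (π s : ℕ) < (π z : ℕ) := h1
    omega
  -- a walk from s to t inside Sub v
  obtain ⟨w1, hw1⟩ := exists_walk_in_sub hT hs
  obtain ⟨w2, hw2⟩ := exists_walk_in_sub hT ht
  set W := w1.reverse.append w2 with hW
  have hWsub : ∀ x ∈ W.support, x ∈ subtreeFinset G u v := by
    intro x hx
    rw [hW, SimpleGraph.Walk.mem_support_append_iff] at hx
    rcases hx with hx | hx
    · exact hw1 x (by simpa using hx)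
    · exact hw2 x hx
  have hWne : ∀ x ∈ W.support, π x ≠ π z := by
    intro x hx hxz
    exact hz ((π.injective hxz) ▸ hWsub x hx)
  obtain ⟨a, b, hab, haW, hbW, hpa, hpb⟩ := walk_straddle π W z hWne (Or.inl ⟨h1, h2⟩)
  have haSub := hWsub a haW
  have hbSub := hWsub b hbW
  -- the path from u to z avoids Sub v
  obtain ⟨p, hp, hpl⟩ := exists_dist_path hc u z
  have hpavoid : ∀ x ∈ p.support, x ∉ subtreeFinset G u v := by
    intro x hx hxv
    have : z ∈ subtreeFinset G u x := (mem_support_iff_anc hT p hp hpl).1 hx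
    exact hz (sub_trans hc hxv this)
  have hpne : ∀ x ∈ p.reverse.support, π x ≠ π a ∧ π x ≠ π b := by
    intro x hx
    rw [SimpleGraph.Walk.support_reverse, List.mem_reverse] at hx
    constructor
    · intro h; exact hpavoid x hx ((π.injective h) ▸ haSub)
    · intro h; exact hpavoid x hx ((π.injective h) ▸ hbSub)
  have huout : ¬(π a < π u ∧ π u < π b) := by
    rintro ⟨hh, -⟩
    have : (π a : ℕ) < (π u : ℕ) := hh
    omega
  obtain ⟨s', t', hst', hsmem, htmem, hsin, htout⟩ :=
    walk_exit π p.reverse a b hpne ⟨hpa, hpb⟩ huout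
  have ht'ne := hpne t' htmem
  rcases lt_trichotomy (π t') (π a) with hlt | heq | hgt
  · exact hplan t' s' a b hst'.symm hab ⟨hlt, hsin.1, hsin.2⟩
  · exact ht'ne.1 heq
  · rcases lt_trichotomy (π t') (π b) with h3 | h3 | h3
    · exact htout ⟨hgt, h3⟩
    · exact ht'ne.2 h3
    · exact hplan a b s' t' hab hst' ⟨hsin.1, hsin.2, h3⟩

lemma planar_of_itv (hT : G.IsTree) {π : Equiv.Perm (Fin n)} (hI : Itv G u π) :
    IsPlanarArr G π := by
  have hc := hT.isConnected
  intro a b c d hab' hcd' h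
  obtain ⟨h1, h2, h3⟩ := h
  -- positions: π a < π c < π b < π d, edges {a,b}, {c,d}
  have hac : a ≠ c := fun h => absurd (h ▸ h1) (lt_irrefl _)
  have hcb : c ≠ b := fun h => absurd (h ▸ h2) (lt_irrefl _)
  have hbd : b ≠ d := fun h => absurd (h ▸ h3) (lt_irrefl _)
  have had : a ≠ d := fun h =>
    absurd (h ▸ (h1.trans (h2.trans h3))) (lt_irrefl _)
  have hcmemI : ∀ w, a ∈ subtreeFinset G u w → b ∈ subtreeFinset G u w →
      c ∈ subtreeFinset G u w := fun w hw1 hw2 => hI w a b c hw1 hw2 h1 h2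
  have hbmemI : ∀ w, c ∈ subtreeFinset G u w → d ∈ subtreeFinset G u w →
      b ∈ subtreeFinset G u w := fun w hw1 hw2 => hI w c d b hw1 hw2 h2 h3
  rcases adj_mem_cases hT hab' with hba | hab2
  · -- b ∈ Sub a
    have hcSa : c ∈ subtreeFinset G u a := hcmemI a (self_mem_sub a) hba
    rcases adj_mem_cases hT hcd' with hdc | hcd2
    · -- d ∈ Sub c
      have hbSc : b ∈ subtreeFinset G u c := hbmemI c (self_mem_sub c) hdc
      have hparb : par G u b = a := par_eq_of_mem hT hab'.symm hba
      have hpmem := par_mem_sub hT hbSc hcb.symm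
      rw [hparb] at hpmem
      exact hac (anc_antisymm hc hpmem hcSa)
    · -- c ∈ Sub d
      have hbSd : b ∈ subtreeFinset G u d := hbmemI d hcd2 (self_mem_sub d)
      rcases anc_total hT hbSd hba with hda | had2
      · have haSd : a ∉ subtreeFinset G u d := fun hm => had (anc_antisymm hc hm hda)
        exact hbd (boundary hT hab'.symm hbSd haSd)
      · have hdSa : d ∉ subtreeFinset G u a := fun hm => had (anc_antisymm hc had2 hm)
        exact hac (boundary hT hcd' hcSa hdSa).symm
  · -- a ∈ Sub b
    have hcSb : c ∈ subtreeFinset G u b := hcmemI b hab2 (self_mem_sub b)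
    rcases adj_mem_cases hT hcd' with hdc | hcd2
    · -- d ∈ Sub c
      have hbSc : b ∉ subtreeFinset G u c := fun hm => hcb (anc_antisymm hc hcSb hm)
      exact hbSc (hI c c d b (self_mem_sub c) hdc h2 h3)
    · -- c ∈ Sub d
      have hbSd : b ∈ subtreeFinset G u d := hbmemI d hcd2 (self_mem_sub d)
      have hparc : par G u c = d := par_eq_of_mem hT hcd' hcd2
      have hpmem := par_mem_sub hT hcSb hcb
      rw [hparc] at hpmem
      exact hbd (anc_antisymm hc hbSd hpmem)

end Interval


section Rank

variable {α β : Type*} [Fintype α] {r : β → β → Prop}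

noncomputable def rankFn (r : β → β → Prop) (f : α → β) (a : α) : ℕ :=
  (univ.filter fun b => r (f b) (f a)).card

variable {f : α → β}

lemma rankFn_eq_zero {f : α → β} {a : α} (hbot : ∀ b, ¬ r (f b) (f a)) :
    rankFn r f a = 0 := by
  rw [rankFn]
  apply Finset.card_eq_zero.mpr
  apply Finset.eq_empty_iff_forall_notMem.mpr
  intro b hb
  exact hbot b (Finset.mem_filter.mp hb).2

lemma rankFn_lt_card (hirr : ∀ x, ¬ r x x) (a : α) :
    rankFn r f a < Fintype.card α := by
  rw [← Finset.card_univ]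
  apply Finset.card_lt_card
  constructor
  · exact Finset.filter_subset _ _
  · intro hsub
    have := hsub (Finset.mem_univ a)
    rw [Finset.mem_filter] at this
    exact hirr _ this.2

lemma rankFn_lt_rankFn (htrans : ∀ x y z, r x y → r y z → r x z)
    (hirr : ∀ x, ¬ r x x) {a b : α} (hab : r (f a) (f b)) :
    rankFn r f a < rankFn r f b := by
  apply Finset.card_lt_card
  constructor
  · intro c hc
    rw [Finset.mem_filter] at hc ⊢
    exact ⟨hc.1, htrans _ _ _ hc.2 hab⟩
  · intro hsub
    have := hsub (by rw [Finset.mem_filter]; exact ⟨Finset.mem_univ a, hab⟩)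
    rw [Finset.mem_filter] at this
    exact hirr _ this.2

variable (htrans : ∀ x y z, r x y → r y z → r x z) (hirr : ∀ x, ¬ r x x)
  (htri : ∀ a b : α, a ≠ b → r (f a) (f b) ∨ r (f b) (f a))

noncomputable def rankEquiv (htrans : ∀ x y z, r x y → r y z → r x z)
    (hirr : ∀ x, ¬ r x x)
    (htri : ∀ a b : α, a ≠ b → r (f a) (f b) ∨ r (f b) (f a))
    {k : ℕ} (hk : Fintype.card α = k) : α ≃ Fin k := by
  apply Equiv.ofBijective (fun a => (⟨rankFn r f a, hk ▸ rankFn_lt_card hirr a⟩ : Fin k))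
  rw [Fintype.bijective_iff_injective_and_card]
  refine ⟨?_, by simp [hk]⟩
  intro a b hab
  by_contra hne
  rcases htri a b hne with h | h
  · have := rankFn_lt_rankFn htrans hirr (f := f) h
    simp only [Fin.mk.injEq] at hab
    omega
  · have := rankFn_lt_rankFn htrans hirr (f := f) h
    simp only [Fin.mk.injEq] at hab
    omega

lemma rankEquiv_lt_iff {k : ℕ} (hk : Fintype.card α = k) {a b : α} :
    rankEquiv htrans hirr htri hk a < rankEquiv htrans hirr htri hk b ↔ r (f a) (f b) := by
  constructor
  · intro h
    have hne : a ≠ b := by rintro rfl; exact absurd h (lt_irrefl _)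
    rcases htri a b hne with h' | h'
    · exact h'
    · exfalso
      have := rankFn_lt_rankFn htrans hirr (f := f) h'
      have h2 : (rankEquiv htrans hirr htri hk a : ℕ) < rankEquiv htrans hirr htri hk b := h
      simp only [rankEquiv, Equiv.ofBijective_apply] at h2
      omega
  · intro h
    have := rankFn_lt_rankFn htrans hirr (f := f) h
    show (rankEquiv htrans hirr htri hk a : ℕ) < rankEquiv htrans hirr htri hk b
    simp only [rankEquiv, Equiv.ofBijective_apply]
    omega

omit [Fintype α] in
lemma equiv_fin_unique {k : ℕ} (e1 e2 : α ≃ Fin k)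
    (h : ∀ a b, e1 a < e1 b ↔ e2 a < e2 b) : e1 = e2 := by
  have hmono : StrictMono (fun i => e2 (e1.symm i)) := by
    intro i j hij
    have : e1 (e1.symm i) < e1 (e1.symm j) := by simpa using hij
    exact (h _ _).1 this
  have hmono2 : StrictMono (fun i => e1 (e2.symm i)) := by
    intro i j hij
    have : e2 (e2.symm i) < e2 (e2.symm j) := by simpa using hij
    exact (h _ _).2 this
  have h1 : ∀ i : Fin k, i ≤ e2 (e1.symm i) := by
    intro i
    haveI : WellFoundedLT (Fin k) := inferInstance
    exact hmono.le_apply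
  have h2 : ∀ i : Fin k, i ≤ e1 (e2.symm i) := by
    intro i
    haveI : WellFoundedLT (Fin k) := inferInstance
    exact hmono2.le_apply
  apply Equiv.ext
  intro a
  have ha1 := h1 (e1 a)
  have ha2 := h2 (e2 a)
  simp only [Equiv.symm_apply_apply] at ha1 ha2
  exact le_antisymm ha1 ha2

end Rank


section Crit

lemma child_mem_sub (h1 : G.Adj v c) (h2 : G.dist u c = G.dist u v + 1) :
    c ∈ subtreeFinset G u v := by
  rw [mem_sub]
  have : G.dist v c = 1 := SimpleGraph.dist_eq_one_iff_adj.2 h1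
  omega

noncomputable def keyFn (G : SimpleGraph (Fin n)) (u : Fin n) (π : Equiv.Perm (Fin n)) (v x : Fin n) : ℕ :=
  if x ∈ subtreeFinset G u v then (π x : ℕ) else (π v : ℕ)

lemma keyFn_of_mem {π : Equiv.Perm (Fin n)} {v x : Fin n} (h : x ∈ subtreeFinset G u v) :
    keyFn G u π v x = (π x : ℕ) := if_pos h

lemma keyFn_of_not_mem {π : Equiv.Perm (Fin n)} {v x : Fin n} (h : x ∉ subtreeFinset G u v) :
    keyFn G u π v x = (π v : ℕ) := if_neg h

lemma nbr_mem_or_par (hT : G.IsTree) {v x : Fin n} (hx : G.Adj v x) :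
    (x ∈ subtreeFinset G u v ∧ G.dist u x = G.dist u v + 1) ∨
      (x ∉ subtreeFinset G u v ∧ par G u v = x ∧ v ≠ u) := by
  have h1 : G.dist v x = 1 := SimpleGraph.dist_eq_one_iff_adj.2 hx
  rcases adj_dist (u := u) hT hx with hd | hd
  · left
    exact ⟨child_mem_sub hx hd, hd⟩
  · right
    have hmem : v ∈ subtreeFinset G u x := child_mem_sub hx.symm hd
    have hnm : x ∉ subtreeFinset G u v := by
      intro h
      exact hx.ne (anc_antisymm hT.isConnected hmem h)
    exact ⟨hnm, par_eq_of_mem hT hx hmem, ne_root_of_mem_par hx hd⟩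

lemma keyFn_tri (hT : G.IsTree) (π : Equiv.Perm (Fin n)) {v a b : Fin n}
    (ha : G.Adj v a) (hb : G.Adj v b) (hne : a ≠ b) :
    keyFn G u π v a ≠ keyFn G u π v b := by
  rcases nbr_mem_or_par hT ha with ⟨h1, -⟩ | ⟨h1, h2, -⟩ <;>
    rcases nbr_mem_or_par hT hb with ⟨g1, -⟩ | ⟨g1, g2, -⟩
  · rw [keyFn_of_mem h1, keyFn_of_mem g1]
    intro h
    exact hne (π.injective (Fin.val_injective h))
  · rw [keyFn_of_mem h1, keyFn_of_not_mem g1]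
    intro h
    exact ha.ne' (π.injective (Fin.val_injective h))
  · rw [keyFn_of_not_mem h1, keyFn_of_mem g1]
    intro h
    exact hb.ne (π.injective (Fin.val_injective h))
  · exact absurd (h2 ▸ g2) (fun h => hne (h2.symm.trans g2))

noncomputable def locEquiv (hT : G.IsTree) (u : Fin n) (π : Equiv.Perm (Fin n)) (v : Fin n) :
    {x // x ∈ G.neighborFinset v} ≃ Fin (G.degree v) :=
  rankEquiv (r := ((· < ·) : ℕ → ℕ → Prop))
    (f := fun a => keyFn G u π v a.1)
    (fun _ _ _ => Nat.lt_trans) (fun _ => Nat.lt_irrefl _)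
    (fun a b hab => by
      have ha : G.Adj v a.1 := (G.mem_neighborFinset _ _).1 a.2
      have hb : G.Adj v b.1 := (G.mem_neighborFinset _ _).1 b.2
      have hv : a.1 ≠ b.1 := fun h => hab (Subtype.ext h)
      exact lt_or_gt_of_ne (keyFn_tri hT π ha hb hv))
    (by rw [Fintype.card_coe]; rfl)

lemma locEquiv_lt_iff (hT : G.IsTree) (π : Equiv.Perm (Fin n)) (v : Fin n)
    (a b : {x // x ∈ G.neighborFinset v}) :
    locEquiv hT u π v a < locEquiv hT u π v b ↔ keyFn G u π v a.1 < keyFn G u π v b.1 :=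
  rankEquiv_lt_iff _ _ _ _

noncomputable def crit (hT : G.IsTree) (u : Fin n) (F : ∀ v : Fin n, {x // x ∈ G.neighborFinset v} → ℕ)
    (x y : Fin n) : Prop :=
  if hxy : x = y then False
  else if hxu : x = u then True
  else if hyu : y = u then False
  else if hyx : y ∈ subtreeFinset G u x then
    F x ⟨par G u x, by rw [SimpleGraph.mem_neighborFinset]; exact (par_spec hT hxu).1⟩ <
      F x ⟨dirc G u x y, by
        rw [SimpleGraph.mem_neighborFinset]; exact (dirc_spec hT hyx (Ne.symm hxy)).1⟩
  else if hxy2 : x ∈ subtreeFinset G u y then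
    F y ⟨dirc G u y x, by rw [SimpleGraph.mem_neighborFinset]; exact (dirc_spec hT hxy2 hxy).1⟩ <
      F y ⟨par G u y, by rw [SimpleGraph.mem_neighborFinset]; exact (par_spec hT hyu).1⟩
  else
    F (lca G u x y) ⟨dirc G u (lca G u x y) x, by
        rw [SimpleGraph.mem_neighborFinset]
        exact (dirc_spec hT (lca_spec hT x y).1 (lca_incomp hT hxy2 hyx).1).1⟩ <
      F (lca G u x y) ⟨dirc G u (lca G u x y) y, by
        rw [SimpleGraph.mem_neighborFinset]
        exact (dirc_spec hT (lca_spec hT x y).2.1 (lca_incomp hT hxy2 hyx).2.1).1⟩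

variable {hT : G.IsTree} {F : ∀ v : Fin n, {x // x ∈ G.neighborFinset v} → ℕ}

lemma crit_self (x : Fin n) : ¬ crit hT u F x x := by simp [crit]

lemma crit_root_left {x y : Fin n} (hxy : x ≠ y) (hxu : x = u) : crit hT u F x y := by
  subst hxu
  rw [crit, dif_neg hxy, dif_pos rfl]
  trivial

lemma crit_root_right {x y : Fin n} (hxu : x ≠ u) (hyu : y = u) : ¬ crit hT u F x y := by
  by_cases hxy : x = y
  · simp [crit, hxy]
  · simp [crit, hxy, hxu, hyu]

lemma crit_of_anc {x y : Fin n} (hxy : x ≠ y) (hxu : x ≠ u) (hyu : y ≠ u)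
    (hyx : y ∈ subtreeFinset G u x)
    (h1 : par G u x ∈ G.neighborFinset x) (h2 : dirc G u x y ∈ G.neighborFinset x) :
    crit hT u F x y ↔ F x ⟨par G u x, h1⟩ < F x ⟨dirc G u x y, h2⟩ := by
  rw [crit, dif_neg hxy, dif_neg hxu, dif_neg hyu, dif_pos hyx]

lemma crit_of_desc {x y : Fin n} (hxy : x ≠ y) (hxu : x ≠ u) (hyu : y ≠ u)
    (hyx : y ∉ subtreeFinset G u x) (hxy2 : x ∈ subtreeFinset G u y)
    (h1 : dirc G u y x ∈ G.neighborFinset y) (h2 : par G u y ∈ G.neighborFinset y) :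
    crit hT u F x y ↔ F y ⟨dirc G u y x, h1⟩ < F y ⟨par G u y, h2⟩ := by
  rw [crit, dif_neg hxy, dif_neg hxu, dif_neg hyu, dif_neg hyx, dif_pos hxy2]

lemma crit_of_incomp {x y : Fin n} (hxy : x ≠ y) (hxu : x ≠ u) (hyu : y ≠ u)
    (hyx : y ∉ subtreeFinset G u x) (hxy2 : x ∉ subtreeFinset G u y)
    (h1 : dirc G u (lca G u x y) x ∈ G.neighborFinset (lca G u x y))
    (h2 : dirc G u (lca G u x y) y ∈ G.neighborFinset (lca G u x y)) :
    crit hT u F x y ↔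
      F (lca G u x y) ⟨dirc G u (lca G u x y) x, h1⟩ <
        F (lca G u x y) ⟨dirc G u (lca G u x y) y, h2⟩ := by
  rw [crit, dif_neg hxy, dif_neg hxu, dif_neg hyu, dif_neg hyx, dif_neg hxy2]


lemma crit_of_anc' {x y : Fin n} (hxy : x ≠ y) (hxu : x ≠ u) (hyu : y ≠ u)
    (hyx : y ∈ subtreeFinset G u x)
    (c : Fin n) (hcd : c = dirc G u x y)
    (h1 : par G u x ∈ G.neighborFinset x) (h2 : c ∈ G.neighborFinset x) :
    crit hT u F x y ↔ F x ⟨par G u x, h1⟩ < F x ⟨c, h2⟩ := by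
  subst hcd
  exact crit_of_anc hxy hxu hyu hyx h1 h2

lemma crit_of_desc' {x y : Fin n} (hxy : x ≠ y) (hxu : x ≠ u) (hyu : y ≠ u)
    (hyx : y ∉ subtreeFinset G u x) (hxy2 : x ∈ subtreeFinset G u y)
    (d : Fin n) (hd : d = dirc G u y x)
    (h1 : d ∈ G.neighborFinset y) (h2 : par G u y ∈ G.neighborFinset y) :
    crit hT u F x y ↔ F y ⟨d, h1⟩ < F y ⟨par G u y, h2⟩ := by
  subst hd
  exact crit_of_desc hxy hxu hyu hyx hxy2 h1 h2

lemma crit_of_incomp' {x y : Fin n} (hxy : x ≠ y) (hxu : x ≠ u) (hyu : y ≠ u)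
    (hyx : y ∉ subtreeFinset G u x) (hxy2 : x ∉ subtreeFinset G u y)
    (m cx cy : Fin n) (hm : m = lca G u x y)
    (hcx : cx = dirc G u m x) (hcy : cy = dirc G u m y)
    (h1 : cx ∈ G.neighborFinset m) (h2 : cy ∈ G.neighborFinset m) :
    crit hT u F x y ↔ F m ⟨cx, h1⟩ < F m ⟨cy, h2⟩ := by
  subst hm; subst hcx; subst hcy
  exact crit_of_incomp hxy hxu hyu hyx hxy2 h1 h2

end Crit


section CMP

variable {π : Equiv.Perm (Fin n)}

lemma incomp_key (hT : G.IsTree) (hI : Itv G u π) {x y : Fin n}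
    (hxy2 : x ∉ subtreeFinset G u y) (hyx : y ∉ subtreeFinset G u x)
    (h : π (dirc G u (lca G u x y) x) < π (dirc G u (lca G u x y) y)) : π x < π y := by
  have hc := hT.isConnected
  obtain ⟨hxm, hym, -⟩ := lca_spec hT x y
  obtain ⟨hxne, hyne, hdne⟩ := lca_incomp hT hxy2 hyx
  set m := lca G u x y with hmdef
  obtain ⟨d1, d2, d3⟩ := dirc_spec hT hxm hxne
  obtain ⟨e1, e2, e3⟩ := dirc_spec hT hym hyne
  set cx := dirc G u m x with hcxdef
  set cy := dirc G u m y with hcydef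
  have hcy_cx : cy ∉ subtreeFinset G u cx := fun hmem =>
    hdne (eq_of_mem_of_depth_eq hc hmem (by omega)).symm
  have hx_cy : x ∉ subtreeFinset G u cy := by
    intro hmem
    rcases anc_total hT hmem d3 with h' | h'
    · exact hcy_cx h'
    · exact hdne (eq_of_mem_of_depth_eq hc h' (by omega))
  have hxcy : π x < π cy := by
    rcases lt_trichotomy (π x) (π cy) with h' | h' | h'
    · exact h'
    · exfalso
      apply hx_cy
      rw [π.injective h']
      exact self_mem_sub cy
    · exact absurd (hI cx cx x cy (self_mem_sub cx) d3 h h') hcy_cx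
  rcases lt_trichotomy (π x) (π y) with h' | h' | h'
  · exact h'
  · exfalso
    apply hxy2
    rw [π.injective h']
    exact self_mem_sub y
  · exact absurd (hI cy y cy x e3 (self_mem_sub cy) h' hxcy) hx_cy

lemma lt_iff_crit (hT : G.IsTree) (hI : Itv G u π) (h0 : (π u : ℕ) = 0) (x y : Fin n) :
    π x < π y ↔ crit hT u (fun v a => keyFn G u π v a.1) x y := by
  have hc := hT.isConnected
  by_cases hxy : x = y
  · subst hxy
    exact ⟨fun h => absurd h (lt_irrefl _), fun h => absurd h (crit_self x)⟩
  by_cases hxu : x = u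
  · subst hxu
    constructor
    · intro _; exact crit_root_left hxy rfl
    · intro _
      rw [Fin.lt_def, h0]
      have : (π y : ℕ) ≠ 0 := by
        intro h
        apply hxy
        apply π.injective
        apply Fin.val_injective
        rw [h, h0]
      omega
  by_cases hyu : y = u
  · subst hyu
    constructor
    · intro h
      rw [Fin.lt_def, h0] at h
      omega
    · intro h
      exact absurd h (crit_root_right hxu rfl)
  by_cases hyx : y ∈ subtreeFinset G u x
  · obtain ⟨d1, d2, d3⟩ := dirc_spec hT hyx (Ne.symm hxy)
    set c := dirc G u x y with hcdef
    have hcmem : c ∈ subtreeFinset G u x := child_mem_sub d1 d2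
    obtain ⟨p1, p2⟩ := par_spec hT hxu
    rw [crit_of_anc hxy hxu hyu hyx
      (by rw [SimpleGraph.mem_neighborFinset]; exact p1)
      (by rw [SimpleGraph.mem_neighborFinset]; exact d1)]
    have hkey1 : keyFn G u π x (par G u x) = (π x : ℕ) :=
      keyFn_of_not_mem (not_mem_sub_of_depth_lt (by omega))
    have hkey2 : keyFn G u π x c = (π c : ℕ) := keyFn_of_mem hcmem
    show π x < π y ↔ keyFn G u π x (par G u x) < keyFn G u π x c
    rw [hkey1, hkey2, ← Fin.lt_def]
    have hxc : x ∉ subtreeFinset G u c := root_not_mem_dirc hT hyx (Ne.symm hxy)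
    have hcx : c ≠ x := fun h => hxc (h ▸ self_mem_sub c)
    constructor
    · intro h
      rcases lt_trichotomy (π x) (π c) with h' | h' | h'
      · exact h'
      · exact absurd (π.injective h').symm hcx
      · exact absurd (hI c c y x (self_mem_sub c) d3 h' h) hxc
    · intro h
      rcases lt_trichotomy (π x) (π y) with h' | h' | h'
      · exact h'
      · exact absurd (π.injective h') hxy
      · exact absurd (hI c y c x d3 (self_mem_sub c) h' h) hxc
  by_cases hxy2 : x ∈ subtreeFinset G u y
  · obtain ⟨d1, d2, d3⟩ := dirc_spec hT hxy2 hxy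
    set d := dirc G u y x with hddef
    have hdmem : d ∈ subtreeFinset G u y := child_mem_sub d1 d2
    obtain ⟨p1, p2⟩ := par_spec hT hyu
    rw [crit_of_desc hxy hxu hyu hyx hxy2
      (by rw [SimpleGraph.mem_neighborFinset]; exact d1)
      (by rw [SimpleGraph.mem_neighborFinset]; exact p1)]
    have hkey1 : keyFn G u π y (par G u y) = (π y : ℕ) :=
      keyFn_of_not_mem (not_mem_sub_of_depth_lt (by omega))
    have hkey2 : keyFn G u π y d = (π d : ℕ) := keyFn_of_mem hdmem
    show π x < π y ↔ keyFn G u π y d < keyFn G u π y (par G u y)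
    rw [hkey1, hkey2, ← Fin.lt_def]
    have hyd : y ∉ subtreeFinset G u d := root_not_mem_dirc hT hxy2 hxy
    have hdy : d ≠ y := fun h => hyd (h ▸ self_mem_sub d)
    constructor
    · intro h
      rcases lt_trichotomy (π d) (π y) with h' | h' | h'
      · exact h'
      · exact absurd (π.injective h') hdy
      · exact absurd (hI d x d y d3 (self_mem_sub d) h h') hyd
    · intro h
      rcases lt_trichotomy (π x) (π y) with h' | h' | h'
      · exact h'
      · exact absurd (π.injective h') hxy
      · exact absurd (hI d d x y (self_mem_sub d) d3 h h') hyd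
  · obtain ⟨hxm, hym, -⟩ := lca_spec hT x y
    obtain ⟨hxne, hyne, hdne⟩ := lca_incomp hT hxy2 hyx
    obtain ⟨d1, d2, d3⟩ := dirc_spec hT hxm hxne
    obtain ⟨e1, e2, e3⟩ := dirc_spec hT hym hyne
    rw [crit_of_incomp hxy hxu hyu hyx hxy2
      (by rw [SimpleGraph.mem_neighborFinset]; exact d1)
      (by rw [SimpleGraph.mem_neighborFinset]; exact e1)]
    have hkey1 : keyFn G u π (lca G u x y) (dirc G u (lca G u x y) x) =
        (π (dirc G u (lca G u x y) x) : ℕ) := keyFn_of_mem (child_mem_sub d1 d2)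
    have hkey2 : keyFn G u π (lca G u x y) (dirc G u (lca G u x y) y) =
        (π (dirc G u (lca G u x y) y) : ℕ) := keyFn_of_mem (child_mem_sub e1 e2)
    show π x < π y ↔ keyFn G u π (lca G u x y) (dirc G u (lca G u x y) x) <
      keyFn G u π (lca G u x y) (dirc G u (lca G u x y) y)
    rw [hkey1, hkey2, ← Fin.lt_def]
    constructor
    · intro h
      rcases lt_trichotomy (π (dirc G u (lca G u x y) x)) (π (dirc G u (lca G u x y) y))
        with h' | h' | h'
      · exact h'
      · exact absurd (π.injective h') hdne
      · exfalso
        have hcomm : lca G u y x = lca G u x y := lca_comm hT y x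
        have h'' : π (dirc G u (lca G u y x) y) < π (dirc G u (lca G u y x) x) := by
          rw [hcomm]; exact h'
        exact absurd h (not_lt_of_gt (incomp_key hT hI hyx hxy2 h''))
    · exact incomp_key hT hI hxy2 hyx

end CMP


section CritProps

variable {hT : G.IsTree} {F F' : ∀ v : Fin n, {x // x ∈ G.neighborFinset v} → ℕ}

lemma par_ne_dirc (hT : G.IsTree) {x y : Fin n} (hxu : x ≠ u)
    (hyx : y ∈ subtreeFinset G u x) (hne : y ≠ x) : par G u x ≠ dirc G u x y := by
  obtain ⟨p1, p2⟩ := par_spec hT hxu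
  obtain ⟨d1, d2, d3⟩ := dirc_spec hT hyx hne
  intro h
  rw [h] at p2
  omega

lemma crit_asymm (hT : G.IsTree) (hFinj : ∀ v (a b : {x // x ∈ G.neighborFinset v}),
    F v a = F v b → a = b) {x y : Fin n} (hne : x ≠ y) :
    crit hT u F y x ↔ ¬ crit hT u F x y := by
  have hc := hT.isConnected
  by_cases hxu : x = u
  · have hyu : y ≠ u := fun h => hne (hxu.trans h.symm)
    constructor
    · intro h
      exact absurd h (crit_root_right hyu hxu)
    · intro h
      exact absurd (crit_root_left hne hxu) h
  by_cases hyu : y = u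
  · constructor
    · intro _ h
      exact crit_root_right hxu hyu h
    · intro _
      exact crit_root_left (Ne.symm hne) hyu
  by_cases hyx : y ∈ subtreeFinset G u x
  · have hxy2 : x ∉ subtreeFinset G u y := fun h => hne (anc_antisymm hc h hyx)
    obtain ⟨p1, p2⟩ := par_spec hT hxu
    obtain ⟨d1, d2, d3⟩ := dirc_spec hT hyx (Ne.symm hne)
    rw [crit_of_desc (Ne.symm hne) hyu hxu hxy2 hyx
      (by rw [SimpleGraph.mem_neighborFinset]; exact d1)
      (by rw [SimpleGraph.mem_neighborFinset]; exact p1),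
      crit_of_anc hne hxu hyu hyx
      (by rw [SimpleGraph.mem_neighborFinset]; exact p1)
      (by rw [SimpleGraph.mem_neighborFinset]; exact d1)]
    have hvne : F x ⟨par G u x, by rw [SimpleGraph.mem_neighborFinset]; exact p1⟩ ≠
        F x ⟨dirc G u x y, by rw [SimpleGraph.mem_neighborFinset]; exact d1⟩ := by
      intro h
      have := hFinj _ _ _ h
      exact par_ne_dirc hT hxu hyx (Ne.symm hne) (congrArg Subtype.val this)
    omega
  by_cases hxy2 : x ∈ subtreeFinset G u y
  · obtain ⟨p1, p2⟩ := par_spec hT hyu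
    obtain ⟨d1, d2, d3⟩ := dirc_spec hT hxy2 hne
    rw [crit_of_anc (Ne.symm hne) hyu hxu hxy2
      (by rw [SimpleGraph.mem_neighborFinset]; exact p1)
      (by rw [SimpleGraph.mem_neighborFinset]; exact d1),
      crit_of_desc hne hxu hyu hyx hxy2
      (by rw [SimpleGraph.mem_neighborFinset]; exact d1)
      (by rw [SimpleGraph.mem_neighborFinset]; exact p1)]
    have hvne : F y ⟨par G u y, by rw [SimpleGraph.mem_neighborFinset]; exact p1⟩ ≠
        F y ⟨dirc G u y x, by rw [SimpleGraph.mem_neighborFinset]; exact d1⟩ := by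
      intro h
      have := hFinj _ _ _ h
      exact par_ne_dirc hT hyu hxy2 hne (congrArg Subtype.val this)
    omega
  · obtain ⟨hxm, hym, -⟩ := lca_spec hT x y
    obtain ⟨hxne, hyne, hdne⟩ := lca_incomp hT hxy2 hyx
    obtain ⟨d1, d2, d3⟩ := dirc_spec hT hxm hxne
    obtain ⟨e1, e2, e3⟩ := dirc_spec hT hym hyne
    have hcomm : lca G u y x = lca G u x y := lca_comm hT y x
    rw [crit_of_incomp' (Ne.symm hne) hyu hxu hxy2 hyx
      (lca G u x y) (dirc G u (lca G u x y) y) (dirc G u (lca G u x y) x)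
      hcomm.symm rfl rfl
      (by rw [SimpleGraph.mem_neighborFinset]; exact e1)
      (by rw [SimpleGraph.mem_neighborFinset]; exact d1),
      crit_of_incomp hne hxu hyu hyx hxy2
      (by rw [SimpleGraph.mem_neighborFinset]; exact d1)
      (by rw [SimpleGraph.mem_neighborFinset]; exact e1)]
    have hvne : F (lca G u x y) ⟨dirc G u (lca G u x y) x,
        by rw [SimpleGraph.mem_neighborFinset]; exact d1⟩ ≠
        F (lca G u x y) ⟨dirc G u (lca G u x y) y,
        by rw [SimpleGraph.mem_neighborFinset]; exact e1⟩ := by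
      intro h
      have := hFinj _ _ _ h
      exact hdne (congrArg Subtype.val this)
    omega

lemma crit_total (hT : G.IsTree) (hFinj : ∀ v (a b : {x // x ∈ G.neighborFinset v}),
    F v a = F v b → a = b) {x y : Fin n} (hne : x ≠ y) :
    crit hT u F x y ∨ crit hT u F y x := by
  by_cases h : crit hT u F x y
  · exact Or.inl h
  · exact Or.inr ((crit_asymm hT hFinj hne).2 h)

lemma crit_congr (hT : G.IsTree)
    (h : ∀ v (a b : {x // x ∈ G.neighborFinset v}), F v a < F v b ↔ F' v a < F' v b)
    (x y : Fin n) : crit hT u F x y ↔ crit hT u F' x y := by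
  rw [crit, crit]
  split_ifs with h1 h2 h3 h4 h5
  · exact Iff.rfl
  · exact Iff.rfl
  · exact Iff.rfl
  · exact h _ _ _
  · exact h _ _ _
  · exact h _ _ _

lemma crit_sub_congr (hT : G.IsTree) {s v z : Fin n}
    (hs : s ∈ subtreeFinset G u v) (hz : z ∉ subtreeFinset G u v) :
    crit hT u F s z ↔ crit hT u F v z := by
  have hc := hT.isConnected
  have hsz : s ≠ z := fun h => hz (h ▸ hs)
  have hvz : v ≠ z := fun h => hz (h ▸ self_mem_sub v)
  have hvu : v ≠ u := by
    intro h
    subst h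
    exact hz (mem_sub_root hc z)
  have hsu : s ≠ u := by
    intro h
    rw [h] at hs
    exact hvu ((root_mem_sub_iff hc).1 hs)
  by_cases hzu : z = u
  · constructor
    · intro h; exact absurd h (crit_root_right hsu hzu)
    · intro h; exact absurd h (crit_root_right hvu hzu)
  by_cases hvz2 : v ∈ subtreeFinset G u z
  · obtain ⟨hsz', hsne', hdirc⟩ := dirc_congr_of_sub hT hs hvz2 hvz
    have hzs : z ∉ subtreeFinset G u s := fun h => hz (sub_trans hc hs h)
    obtain ⟨p1, p2⟩ := par_spec hT hzu
    obtain ⟨d1, d2, d3⟩ := dirc_spec hT hsz' hsne'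
    obtain ⟨e1, e2, e3⟩ := dirc_spec hT hvz2 hvz
    rw [crit_of_desc' hsz hsu hzu hzs hsz'
      (dirc G u z v) hdirc.symm
      (by rw [SimpleGraph.mem_neighborFinset]; exact e1)
      (by rw [SimpleGraph.mem_neighborFinset]; exact p1),
      crit_of_desc hvz hvu hzu hz hvz2
      (by rw [SimpleGraph.mem_neighborFinset]; exact e1)
      (by rw [SimpleGraph.mem_neighborFinset]; exact p1)]
  · obtain ⟨h1', h2', hlca, hdirc⟩ := lca_congr hT hs hz hvz2
    obtain ⟨hxm, hym, -⟩ := lca_spec hT v z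
    obtain ⟨hxne, hyne, hdne⟩ := lca_incomp hT hvz2 hz
    obtain ⟨d1, d2, d3⟩ := dirc_spec hT hxm hxne
    obtain ⟨e1, e2, e3⟩ := dirc_spec hT hym hyne
    rw [crit_of_incomp' hsz hsu hzu h2' h1'
      (lca G u v z) (dirc G u (lca G u v z) v) (dirc G u (lca G u v z) z)
      hlca.symm hdirc.symm rfl
      (by rw [SimpleGraph.mem_neighborFinset]; exact d1)
      (by rw [SimpleGraph.mem_neighborFinset]; exact e1),
      crit_of_incomp hvz hvu hzu hz hvz2
      (by rw [SimpleGraph.mem_neighborFinset]; exact d1)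
      (by rw [SimpleGraph.mem_neighborFinset]; exact e1)]

lemma itv_of_crit (hT : G.IsTree) {π : Equiv.Perm (Fin n)}
    (hFinj : ∀ v (a b : {x // x ∈ G.neighborFinset v}), F v a = F v b → a = b)
    (hcrit : ∀ x y, π x < π y ↔ crit hT u F x y) : Itv G u π := by
  intro v s t z hs ht h1 h2
  by_contra hz
  have hc1 : crit hT u F s z := (hcrit s z).1 h1
  have hc2 : crit hT u F z t := (hcrit z t).1 h2
  have htz : t ≠ z := fun h => hz (h ▸ ht)
  have hvz : crit hT u F v z := (crit_sub_congr hT hs hz).1 hc1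
  have : crit hT u F z t ↔ ¬ crit hT u F t z := crit_asymm hT hFinj htz
  have hntz : ¬ crit hT u F t z := this.1 hc2
  exact hntz ((crit_sub_congr hT ht hz).2 hvz)

end CritProps


section Addr

variable (hT : G.IsTree) (F : ∀ v : Fin n, {x // x ∈ G.neighborFinset v} → ℕ)

noncomputable def chain (u : Fin n) (x : Fin n) : List ℕ :=
  if hx : x = u then []
  else chain u (par G u x) ++
    [F (par G u x) ⟨x, by rw [SimpleGraph.mem_neighborFinset]; exact (par_spec hT hx).1.symm⟩]
termination_by G.dist u x
decreasing_by
  have := (par_spec hT hx).2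
  omega

lemma chain_root : chain hT F u u = [] := by rw [chain]; simp

lemma chain_ne {x : Fin n} (hx : x ≠ u) :
    chain hT F u x = chain hT F u (par G u x) ++
      [F (par G u x) ⟨x, by rw [SimpleGraph.mem_neighborFinset]; exact (par_spec hT hx).1.symm⟩] := by
  rw [chain]
  rw [dif_neg hx]

noncomputable def addr (u : Fin n) (x : Fin n) : List ℕ :=
  if hx : x = u then []
  else chain hT F u x ++
    [F x ⟨par G u x, by rw [SimpleGraph.mem_neighborFinset]; exact (par_spec hT hx).1⟩]

lemma addr_root : addr hT F u u = [] := dif_pos rfl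

lemma addr_ne {x : Fin n} (hx : x ≠ u) :
    addr hT F u x = chain hT F u x ++
      [F x ⟨par G u x, by rw [SimpleGraph.mem_neighborFinset]; exact (par_spec hT hx).1⟩] :=
  dif_neg hx

lemma chain_prefix_aux (d : ℕ) :
    ∀ x y (c : Fin n), G.dist u y ≤ d → y ∈ subtreeFinset G u x → y ≠ x →
      c = dirc G u x y → ∀ (hmem : c ∈ G.neighborFinset x),
      ∃ l, chain hT F u y = chain hT F u x ++ (F x ⟨c, hmem⟩) :: l := by
  have hc := hT.isConnected
  induction d with
  | zero =>
    intro x y c hd hy hne hcd hmem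
    exfalso
    have hy0 : G.dist u y = 0 := by omega
    have : u = y := hc.dist_eq_zero_iff.1 hy0
    rw [← this] at hy hne
    exact hne ((root_mem_sub_iff hc).1 hy).symm
  | succ d ih =>
    intro x y c hd hy hne hcd hmem
    have hyu : y ≠ u := by
      intro h
      rw [h] at hy hne
      exact hne ((root_mem_sub_iff hc).1 hy).symm
    obtain ⟨p1, p2⟩ := par_spec hT hyu
    by_cases hp : par G u y = x
    · have hcy : c = y := by
        rw [hcd]
        apply dirc_child hT (hp ▸ p1.symm)
        rw [← hp]
        omega
      subst hcy
      refine ⟨[], ?_⟩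
      rw [chain_ne hT F hyu]
      subst hp
      rfl
    · have hpx : par G u y ∈ subtreeFinset G u x := par_mem_sub hT hy hne
      have hd' : G.dist u (par G u y) ≤ d := by omega
      obtain ⟨e1, e2, e3⟩ := dirc_spec hT hpx hp
      have hdeq : c = dirc G u x (par G u y) := by
        rw [hcd]
        exact dirc_eq_of hT hy hne e1 e2
          (sub_trans hc e3 (mem_sub_par hT hyu))
      have hmem' : dirc G u x (par G u y) ∈ G.neighborFinset x := by
        rw [SimpleGraph.mem_neighborFinset]; exact e1
      obtain ⟨l', hl'⟩ := ih x (par G u y) (dirc G u x (par G u y)) hd' hpx hp rfl hmem'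
      subst hdeq
      refine ⟨l' ++ [F (par G u y) ⟨y, by
        rw [SimpleGraph.mem_neighborFinset]; exact p1.symm⟩], ?_⟩
      rw [chain_ne hT F hyu, hl']
      simp

lemma chain_prefix {x y : Fin n} (hy : y ∈ subtreeFinset G u x) (hne : y ≠ x)
    (c : Fin n) (hcd : c = dirc G u x y) (hmem : c ∈ G.neighborFinset x) :
    ∃ l, chain hT F u y = chain hT F u x ++ (F x ⟨c, hmem⟩) :: l :=
  chain_prefix_aux hT F (G.dist u y) x y c le_rfl hy hne hcd hmem

end Addr

section Lex

lemma lex_append_cons_iff {a b : ℕ} (hab : a ≠ b) (s t1 t2 : List ℕ) :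
    List.Lex (· < ·) (s ++ a :: t1) (s ++ b :: t2) ↔ a < b := by
  induction s with
  | nil =>
    simp only [List.nil_append]
    constructor
    · intro h
      cases h with
      | rel h => exact h
      | cons h => exact absurd rfl hab
    · exact fun h => List.Lex.rel h
  | cons c s ih =>
    simp only [List.cons_append]
    rw [List.lex_cons_iff]
    exact ih

lemma lex_nil_lt {l : List ℕ} (hl : l ≠ []) : List.Lex (· < ·) [] l := by
  cases l with
  | nil => exact absurd rfl hl
  | cons a t => exact List.Lex.nil

end Lex


section AddrLt

variable {hT : G.IsTree} {F : ∀ v : Fin n, {x // x ∈ G.neighborFinset v} → ℕ}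

lemma addr_lt_iff (hFinj : ∀ v (a b : {x // x ∈ G.neighborFinset v}), F v a = F v b → a = b)
    {x y : Fin n} (hne : x ≠ y) :
    List.Lex (· < ·) (addr hT F u x) (addr hT F u y) ↔ crit hT u F x y := by
  have hc := hT.isConnected
  by_cases hxu : x = u
  · subst hxu
    rw [addr_root]
    constructor
    · intro _
      exact crit_root_left hne rfl
    · intro _
      apply lex_nil_lt
      rw [addr_ne hT F (Ne.symm hne)]
      simp
  by_cases hyu : y = u
  · subst hyu
    rw [addr_root]
    constructor
    · intro h
      exact absurd h ((show ∀ l : List ℕ, ¬ List.Lex (· < ·) l [] from fun l h' => by cases h') _)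
    · intro h
      exact absurd h (crit_root_right hxu rfl)
  by_cases hyx : y ∈ subtreeFinset G u x
  · obtain ⟨d1, d2, d3⟩ := dirc_spec hT hyx (Ne.symm hne)
    obtain ⟨p1, p2⟩ := par_spec hT hxu
    have hmemd : dirc G u x y ∈ G.neighborFinset x := by
      rw [SimpleGraph.mem_neighborFinset]; exact d1
    have hmemp : par G u x ∈ G.neighborFinset x := by
      rw [SimpleGraph.mem_neighborFinset]; exact p1
    obtain ⟨l, hl⟩ := chain_prefix hT F hyx (Ne.symm hne) _ rfl hmemd
    rw [addr_ne hT F hxu, addr_ne hT F hyu, hl,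
      crit_of_anc hne hxu hyu hyx hmemp hmemd]
    have hfne : F x ⟨par G u x, hmemp⟩ ≠ F x ⟨dirc G u x y, hmemd⟩ := fun h =>
      par_ne_dirc hT hxu hyx (Ne.symm hne) (congrArg Subtype.val (hFinj _ _ _ h))
    rw [List.append_assoc, List.cons_append]
    exact lex_append_cons_iff hfne _ _ _
  by_cases hxy2 : x ∈ subtreeFinset G u y
  · obtain ⟨d1, d2, d3⟩ := dirc_spec hT hxy2 hne
    obtain ⟨p1, p2⟩ := par_spec hT hyu
    have hmemd : dirc G u y x ∈ G.neighborFinset y := by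
      rw [SimpleGraph.mem_neighborFinset]; exact d1
    have hmemp : par G u y ∈ G.neighborFinset y := by
      rw [SimpleGraph.mem_neighborFinset]; exact p1
    obtain ⟨l, hl⟩ := chain_prefix hT F hxy2 hne _ rfl hmemd
    rw [addr_ne hT F hxu, addr_ne hT F hyu, hl,
      crit_of_desc hne hxu hyu hyx hxy2 hmemd hmemp]
    have hfne : F y ⟨dirc G u y x, hmemd⟩ ≠ F y ⟨par G u y, hmemp⟩ := fun h =>
      par_ne_dirc hT hyu hxy2 hne (congrArg Subtype.val (hFinj _ _ _ h)).symm
    rw [List.append_assoc, List.cons_append]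
    exact lex_append_cons_iff hfne _ _ _
  · obtain ⟨hxm, hym, -⟩ := lca_spec hT x y
    obtain ⟨hxne, hyne, hdne⟩ := lca_incomp hT hxy2 hyx
    obtain ⟨d1, d2, d3⟩ := dirc_spec hT hxm hxne
    obtain ⟨e1, e2, e3⟩ := dirc_spec hT hym hyne
    have hmemx : dirc G u (lca G u x y) x ∈ G.neighborFinset (lca G u x y) := by
      rw [SimpleGraph.mem_neighborFinset]; exact d1
    have hmemy : dirc G u (lca G u x y) y ∈ G.neighborFinset (lca G u x y) := by
      rw [SimpleGraph.mem_neighborFinset]; exact e1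
    obtain ⟨lx, hlx⟩ := chain_prefix hT F hxm hxne _ rfl hmemx
    obtain ⟨ly, hly⟩ := chain_prefix hT F hym hyne _ rfl hmemy
    rw [addr_ne hT F hxu, addr_ne hT F hyu, hlx, hly,
      crit_of_incomp hne hxu hyu hyx hxy2 hmemx hmemy]
    have hfne : F (lca G u x y) ⟨dirc G u (lca G u x y) x, hmemx⟩ ≠
        F (lca G u x y) ⟨dirc G u (lca G u x y) y, hmemy⟩ := fun h =>
      hdne (congrArg Subtype.val (hFinj _ _ _ h))
    rw [List.append_assoc, List.cons_append, List.append_assoc, List.cons_append]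
    exact lex_append_cons_iff hfne _ _ _

end AddrLt


section Children

variable {hT : G.IsTree} {F : ∀ v : Fin n, {x // x ∈ G.neighborFinset v} → ℕ}

lemma child_ne_root (hT : G.IsTree) {v c : Fin n} (ha : G.Adj v c)
    (hm : c ∈ subtreeFinset G u v) : c ≠ u := by
  intro h
  rw [h] at hm
  have := (root_mem_sub_iff hT.isConnected).1 hm
  exact ha.ne (this.trans h.symm)

lemma crit_children (hT : G.IsTree) {v a' b' : Fin n}
    (ha : G.Adj v a') (hda : G.dist u a' = G.dist u v + 1)
    (hb : G.Adj v b') (hdb : G.dist u b' = G.dist u v + 1)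
    (hne : a' ≠ b') (h1 : a' ∈ G.neighborFinset v) (h2 : b' ∈ G.neighborFinset v) :
    crit hT u F a' b' ↔ F v ⟨a', h1⟩ < F v ⟨b', h2⟩ := by
  have hc := hT.isConnected
  have hamem : a' ∈ subtreeFinset G u v := child_mem_sub ha hda
  have hbmem : b' ∈ subtreeFinset G u v := child_mem_sub hb hdb
  have hau : a' ≠ u := child_ne_root hT ha hamem
  have hbu : b' ≠ u := child_ne_root hT hb hbmem
  have hba : b' ∉ subtreeFinset G u a' := fun hm =>
    hne (eq_of_mem_of_depth_eq hc hm (by omega)).symm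
  have hab : a' ∉ subtreeFinset G u b' := fun hm =>
    hne (eq_of_mem_of_depth_eq hc hm (by omega))
  have hlca : lca G u a' b' = v := by
    apply lca_eq_of hT hamem hbmem
    intro m' h1' h2'
    rcases anc_total hT hamem h1' with h | h
    · exact h
    · have hd1 := depth_le_of_mem h
      have hd2 := depth_le_of_mem h1'
      by_cases hdv : G.dist u m' = G.dist u v
      · have : m' = v := eq_of_mem_of_depth_eq hc h hdv
        rw [this]
        exact self_mem_sub v
      · have : a' = m' := eq_of_mem_of_depth_eq hc h1' (by omega)
        rw [← this] at h2'
        exact absurd h2' hba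
  exact crit_of_incomp' hne hau hbu hba hab v a' b' hlca.symm
    (dirc_child hT ha hda).symm (dirc_child hT hb hdb).symm h1 h2

end Children

end ProjProof

open ProjProof in
theorem card_projSet1 (n : ℕ) (G : SimpleGraph (Fin n)) (hT : G.IsTree) (u : Fin n) :
    (projSet1 G u).card = ∏ v : Fin n, (G.degree v).factorial := by
  classical
  have hc := hT.isConnected
  have hmem : ∀ π : Equiv.Perm (Fin n),
      π ∈ projSet1 G u ↔ IsPlanarArr G π ∧ (π u : ℕ) = 0 := by
    intro π
    rw [projSet1, Finset.mem_filter]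
    simp only [Finset.mem_univ, true_and, IsProjectiveArr]
    constructor
    · rintro ⟨⟨hp, -⟩, h0⟩
      exact ⟨hp, h0⟩
    · rintro ⟨hp, h0⟩
      refine ⟨⟨hp, ?_⟩, h0⟩
      rintro s t hst ⟨hs1, -⟩
      have h1 : (π s : ℕ) < (π u : ℕ) := hs1
      omega
  have hcard : Fintype.card (∀ v : Fin n, {x // x ∈ G.neighborFinset v} ≃ Fin (G.degree v)) =
      ∏ v : Fin n, (G.degree v).factorial := by
    rw [Fintype.card_pi]
    apply Finset.prod_congr rfl
    intro v _
    have hcv : Fintype.card {x // x ∈ G.neighborFinset v} = G.degree v := by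
      rw [Fintype.card_coe]
      rfl
    have e : {x // x ∈ G.neighborFinset v} ≃ Fin (G.degree v) := Fintype.equivFinOfCardEq hcv
    rw [Fintype.card_equiv e, hcv]
  rw [← hcard, ← Finset.card_univ]
  apply Finset.card_bij (fun π _ => ProjProof.locEquiv hT u π)
  · intro π hπ
    exact Finset.mem_univ _
  · intro π hπ π' hπ' heq
    rw [hmem] at hπ hπ'
    have hI : Itv G u π := itv_of_planar hT hπ.1 hπ.2
    have hI' : Itv G u π' := itv_of_planar hT hπ'.1 hπ'.2
    apply equiv_fin_unique π π'
    intro x y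
    rw [lt_iff_crit hT hI hπ.2 x y, lt_iff_crit hT hI' hπ'.2 x y]
    apply crit_congr hT
    intro v a b
    rw [← locEquiv_lt_iff hT π v a b, ← locEquiv_lt_iff hT π' v a b, congrFun heq v]
  · intro E _
    set F : ∀ v : Fin n, {x // x ∈ G.neighborFinset v} → ℕ := fun v a => (E v a : ℕ) with hF
    have hFinj : ∀ v (a b : {x // x ∈ G.neighborFinset v}), F v a = F v b → a = b := by
      intro v a b h
      exact (E v).injective (Fin.val_injective h)
    have htrans : ∀ x y z : List ℕ,
        List.Lex (· < ·) x y → List.Lex (· < ·) y z → List.Lex (· < ·) x z :=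
      fun x y z h1 h2 => List.lex_trans Nat.lt_trans h1 h2
    have hirr : ∀ x : List ℕ, ¬ List.Lex (· < ·) x x := fun x => irrefl_of _ x
    have htri : ∀ a b : Fin n, a ≠ b →
        List.Lex (· < ·) (addr hT F u a) (addr hT F u b) ∨
        List.Lex (· < ·) (addr hT F u b) (addr hT F u a) := by
      intro a b hab
      rcases crit_total hT hFinj hab with h | h
      · exact Or.inl ((addr_lt_iff hFinj hab).2 h)
      · exact Or.inr ((addr_lt_iff hFinj (Ne.symm hab)).2 h)
    set π₀ : Equiv.Perm (Fin n) :=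
      rankEquiv (f := addr hT F u) htrans hirr htri (Fintype.card_fin n) with hπ₀
    have hcrit : ∀ x y, π₀ x < π₀ y ↔ crit hT u F x y := by
      intro x y
      by_cases hxy : x = y
      · subst hxy
        exact ⟨fun h => absurd h (lt_irrefl _), fun h => absurd h (crit_self x)⟩
      · rw [hπ₀, rankEquiv_lt_iff]
        exact addr_lt_iff hFinj hxy
    have h0 : (π₀ u : ℕ) = 0 := by
      have hval : (π₀ u : ℕ) = rankFn (List.Lex (· < ·)) (addr hT F u) u := by
        rw [hπ₀]
        simp only [rankEquiv, Equiv.ofBijective_apply]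
      rw [hval]
      apply rankFn_eq_zero
      intro b hb2
      rw [addr_root] at hb2
      exact (show ∀ l : List ℕ, ¬ List.Lex (· < ·) l [] from fun l h' => by cases h') _ hb2
    have hItv : Itv G u π₀ := itv_of_crit hT hFinj hcrit
    refine ⟨π₀, ?_, ?_⟩
    · rw [hmem]
      exact ⟨planar_of_itv hT hItv, h0⟩
    · funext v
      apply equiv_fin_unique
      intro a b
      rw [locEquiv_lt_iff hT π₀ v a b]
      by_cases hab : a = b
      · subst hab
        simp
      have hab1 : a.1 ≠ b.1 := fun h => hab (Subtype.ext h)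
      have haadj : G.Adj v a.1 := (G.mem_neighborFinset _ _).1 a.2
      have hbadj : G.Adj v b.1 := (G.mem_neighborFinset _ _).1 b.2
      rcases nbr_mem_or_par hT haadj with ⟨ham, had⟩ | ⟨hanm, hap, hvu⟩ <;>
        rcases nbr_mem_or_par hT hbadj with ⟨hbm, hbd⟩ | ⟨hbnm, hbp, hvu'⟩
      · -- both children
        rw [keyFn_of_mem ham, keyFn_of_mem hbm, ← Fin.lt_def, hcrit,
          crit_children hT haadj had hbadj hbd hab1 a.2 b.2]
        simp only [Subtype.coe_eta]
        exact Iff.symm Fin.lt_def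
      · -- a child, b parent
        rw [keyFn_of_mem ham, keyFn_of_not_mem hbnm, ← Fin.lt_def, hcrit]
        have hav : a.1 ≠ v := haadj.ne'
        have hau : a.1 ≠ u := child_ne_root hT haadj ham
        have hvna : v ∉ subtreeFinset G u a.1 := fun hm =>
          hav (anc_antisymm hc ham hm)
        have hmempar : par G u v ∈ G.neighborFinset v := by
          rw [SimpleGraph.mem_neighborFinset]
          exact (par_spec hT hvu').1
        rw [crit_of_desc' hav hau hvu' hvna ham a.1
          (dirc_child hT haadj had).symm a.2 hmempar]
        have hbeq : (⟨par G u v, hmempar⟩ : {x // x ∈ G.neighborFinset v}) = b :=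
          Subtype.ext hbp
        rw [hbeq]
        simp only [Subtype.coe_eta]
        exact Iff.symm Fin.lt_def
      · -- a parent, b child
        rw [keyFn_of_not_mem hanm, keyFn_of_mem hbm, ← Fin.lt_def, hcrit]
        have hbv : b.1 ≠ v := hbadj.ne'
        have hbu : b.1 ≠ u := child_ne_root hT hbadj hbm
        have hmempar : par G u v ∈ G.neighborFinset v := by
          rw [SimpleGraph.mem_neighborFinset]
          exact (par_spec hT hvu).1
        rw [crit_of_anc' (Ne.symm hbv) hvu hbu hbm b.1
          (dirc_child hT hbadj hbd).symm hmempar b.2]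
        have haeq : (⟨par G u v, hmempar⟩ : {x // x ∈ G.neighborFinset v}) = a :=
          Subtype.ext hap
        rw [haeq]
        simp only [Subtype.coe_eta]
        exact Iff.symm Fin.lt_def
      · exact absurd (Subtype.ext (hap.symm.trans hbp)) hab
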